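/- arXiv:1612.04194 — 2 statements merged into one kernel-verified Lean document; each statement's English description precedes it below -/
import Mathlib

section
/- For the wheel graph W_{n+1} = K_1 + C_n: if the cycle C_n admits a J-colouring, then W_{n+1} admits a J-colouring and 𝒥(W_{n+1}) = 1 + 𝒥(C_n). Consequently 𝒥(W_{n+1}) = 4 if n ≡ 0 (mod 3), and 𝒥(W_{n+1}) = 3 if n is even and n ≢ 0 (mod 3). -/
open SimpleGraph

/-- A colouring is proper. -/
def ProperColoring {V : Type*} {k : ℕ} (G : SimpleGraph V) (c : V → Fin k) : Prop :=
  ∀ u v, G.Adj u v → c u ≠ c v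

/-- Vertex `v` belongs to a rainbow neighbourhood: its closed neighbourhood
contains every colour. -/
def RainbowAt {V : Type*} {k : ℕ} (G : SimpleGraph V) (c : V → Fin k) (v : V) : Prop :=
  ∀ i : Fin k, ∃ u, (u = v ∨ G.Adj v u) ∧ c u = i

/-- A J-colouring: a proper colouring in which every vertex belongs to a
rainbow neighbourhood. -/
def IsJColoring {V : Type*} {k : ℕ} (G : SimpleGraph V) (c : V → Fin k) : Prop :=
  ProperColoring G c ∧ ∀ v, RainbowAt G c v

/-- The wheel graph `W_{n+1} = K_1 + C_n`: a central vertex `none` joined to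
every vertex of the cycle `C_n`. -/
def wheelGraph (n : ℕ) : SimpleGraph (Option (Fin n)) where
  Adj u v :=
    match u, v with
    | none, none => False
    | none, some _ => True
    | some _, none => True
    | some i, some j => (cycleGraph n).Adj i j
  symm := by
    constructor
    intro u v h
    match u, v with
    | none, some _ => trivial
    | some _, none => trivial
    | some i, some j => exact (cycleGraph n).adj_symm h
  loopless := by
    constructor
    intro u h
    match u with
    | none => exact h
    | some i => exact (cycleGraph n).irrefl h

/-- The J-colouring number: the largest number of colours in a J-colouring. -/
noncomputable def JNumber {V : Type*} (G : SimpleGraph V) : ℕ :=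
  sSup {k : ℕ | ∃ c : V → Fin k, IsJColoring G c}
section Helpers

open SimpleGraph Fin.CommRing

variable {m : ℕ}

lemma cyc_adj_succ (v : Fin (m + 3)) : (cycleGraph (m + 3)).Adj v (v + 1) := by
  have : (m + 3) = (m + 1) + 2 := by ring
  exact cycleGraph_adj.mpr (Or.inr (by ring))

lemma cyc_adj_pred (v : Fin (m + 3)) : (cycleGraph (m + 3)).Adj v (v - 1) := by
  exact cycleGraph_adj.mpr (Or.inl (by ring))

lemma cyc_adj_closed {v u : Fin (m + 3)} (h : (cycleGraph (m + 3)).Adj v u) :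
    u = v + 1 ∨ u = v - 1 := by
  rcases cycleGraph_adj.mp h with h1 | h1
  · right
    have : v - u + u = 1 + u := by rw [h1]
    rw [sub_add_cancel] at this
    rw [this]; ring
  · left
    have : u - v + v = 1 + v := by rw [h1]
    rw [sub_add_cancel] at this
    rw [this]; ring

lemma fin_succ_ne (v : Fin (m + 3)) : v + 1 ≠ v := by
  intro h
  have : (1 : Fin (m + 3)) = 0 := by
    have := congrArg (fun x => x - v) h
    simpa [add_comm, add_sub_cancel_right, sub_self] using this
  simpa [Fin.ext_iff] using this

lemma fin_pred_ne (v : Fin (m + 3)) : v - 1 ≠ v := by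
  intro h
  have : (1 : Fin (m + 3)) = 0 := by
    have := congrArg (fun x => v - x) h
    simpa [sub_sub_cancel, sub_self] using this
  simpa [Fin.ext_iff] using this

lemma fin_succ_ne_pred (v : Fin (m + 3)) : v + 1 ≠ v - 1 := by
  intro h
  have h2 : (2 : Fin (m + 3)) = 0 := by
    have := congrArg (fun x => x + 1 - v) h
    simp only [sub_add_cancel] at this
    calc (2 : Fin (m + 3)) = v + 1 + 1 - v := by ring
      _ = v - 1 + 1 - v := by rw [h]
      _ = 0 := by ring
  have : ((2 : Fin (m + 3)) : ℕ) = 0 := by rw [h2]; rfl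
  rw [Fin.val_two] at this
  omega

end Helpers
section Helpers2
open SimpleGraph
variable {m : ℕ}

lemma val_add_one (v : Fin (m + 3)) : ((v + 1 : Fin (m + 3)) : ℕ) = ((v : ℕ) + 1) % (m + 3) := by
  rw [Fin.add_def]
  congr 1

lemma val_sub_one (v : Fin (m + 3)) : ((v - 1 : Fin (m + 3)) : ℕ) = ((m + 2) + (v : ℕ)) % (m + 3) := by
  rw [Fin.sub_def]
  congr 1

/-- Construction of a 3-J-colouring when 3 ∣ n. -/
lemma exists_three_coloring (hd : 3 ∣ (m + 3)) :
    ∃ c : Fin (m + 3) → Fin 3, IsJColoring (cycleGraph (m + 3)) c := by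
  refine ⟨fun v => ⟨(v : ℕ) % 3, by omega⟩, ?_, ?_⟩
  · -- proper
    have key : ∀ v : Fin (m + 3), ((v + 1 : Fin (m + 3)) : ℕ) % 3 = ((v : ℕ) + 1) % 3 := by
      intro v
      rw [val_add_one]
      rcases Nat.lt_or_ge ((v : ℕ) + 1) (m + 3) with hlt | hge
      · rw [Nat.mod_eq_of_lt hlt]
      · have hv : (v : ℕ) + 1 = m + 3 := by have := v.isLt; omega
        rw [hv, Nat.mod_self]
        omega
    intro u v huv
    rcases cyc_adj_closed huv with rfl | rfl
    · intro hc
      have := congrArg Fin.val hc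
      simp only at this
      rw [key u] at this
      omega
    · intro hc
      have := congrArg Fin.val hc
      simp only at this
      have := key (u - 1)
      rw [sub_add_cancel] at this
      omega
  · -- rainbow
    intro v i
    have hsucc : ((v + 1 : Fin (m + 3)) : ℕ) % 3 = ((v : ℕ) + 1) % 3 := by
      rw [val_add_one]
      rcases Nat.lt_or_ge ((v : ℕ) + 1) (m + 3) with hlt | hge
      · rw [Nat.mod_eq_of_lt hlt]
      · have hv : (v : ℕ) + 1 = m + 3 := by have := v.isLt; omega
        rw [hv, Nat.mod_self]; omega
    have hpred : ((v - 1 : Fin (m + 3)) : ℕ) % 3 = ((v : ℕ) + 2) % 3 := by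
      rw [val_sub_one]
      rcases Nat.eq_zero_or_pos (v : ℕ) with h0 | hpos
      · have h1 : (m + 2 + (v : ℕ)) % (m + 3) = m + 2 := by
          rw [h0]
          simpa using Nat.mod_eq_of_lt (show m + 2 < m + 3 by omega)
        rw [h1]
        omega
      · have hv := v.isLt
        have h1 : (m + 2 + (v : ℕ)) % (m + 3) = (v : ℕ) - 1 := by
          rw [Nat.mod_eq_sub_mod (by omega),
            show m + 2 + (v : ℕ) - (m + 3) = (v : ℕ) - 1 by omega]
          exact Nat.mod_eq_of_lt (by omega)
        rw [h1]
        omega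
    have hi := i.isLt
    have : (i : ℕ) = (v : ℕ) % 3 ∨ (i : ℕ) = ((v : ℕ) + 1) % 3 ∨ (i : ℕ) = ((v : ℕ) + 2) % 3 := by
      omega
    rcases this with hh | hh | hh
    · exact ⟨v, Or.inl rfl, by apply Fin.ext; simp [hh]⟩
    · exact ⟨v + 1, Or.inr (cyc_adj_succ v), by apply Fin.ext; simp [hsucc, hh]⟩
    · exact ⟨v - 1, Or.inr (cyc_adj_pred v), by apply Fin.ext; simp [hpred, hh]⟩

end Helpers2
section Helpers3
open SimpleGraph Fin.CommRing
variable {m : ℕ}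

lemma cyc_adj_zero_one : (cycleGraph (m + 3)).Adj 0 1 := by
  have := cyc_adj_succ (0 : Fin (m + 3))
  simpa using this

lemma cycle_k_ge_two {k : ℕ} (c : Fin (m + 3) → Fin k)
    (hc : IsJColoring (cycleGraph (m + 3)) c) : 2 ≤ k := by
  match k with
  | 0 => exact (c 0).elim0
  | 1 =>
    exact absurd (Subsingleton.elim (c 0) (c 1)) (hc.1 0 1 cyc_adj_zero_one)
  | k + 2 => omega

lemma cycle_k_le_three {k : ℕ} (c : Fin (m + 3) → Fin k)
    (hc : IsJColoring (cycleGraph (m + 3)) c) : k ≤ 3 := by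
  have hrb := hc.2 0
  choose f hf1 hf2 using hrb
  have hmem : ∀ i ∈ (Finset.univ : Finset (Fin k)),
      f i ∈ ({0, 0 + 1, 0 - 1} : Finset (Fin (m + 3))) := by
    intro i _
    rcases hf1 i with h | h
    · simp [h]
    · rcases cyc_adj_closed h with h' | h' <;> simp [h']
  have hinj : Set.InjOn f (Finset.univ : Finset (Fin k)) := by
    intro a _ b _ hab
    rw [← hf2 a, ← hf2 b, hab]
  have hcard := Finset.card_le_card_of_injOn f hmem hinj
  have h3 : ({0, 0 + 1, 0 - 1} : Finset (Fin (m + 3))).card ≤ 3 := by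
    refine (Finset.card_insert_le _ _).trans ?_
    have := (Finset.card_insert_le (0 + 1 : Fin (m + 3)) ({0 - 1} : Finset (Fin (m + 3))))
    simp only [Finset.card_singleton] at this
    omega
  simpa using hcard.trans h3

lemma wheel_adj_some_some {n : ℕ} {i j : Fin n} :
    (wheelGraph n).Adj (some i) (some j) ↔ (cycleGraph n).Adj i j := Iff.rfl

lemma wheel_adj_some_none {n : ℕ} {i : Fin n} : (wheelGraph n).Adj (some i) none := trivial

lemma wheel_adj_none_some {n : ℕ} {i : Fin n} : (wheelGraph n).Adj none (some i) := trivial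

lemma wheel_adj_closed {u : Option (Fin (m + 3))} {v : Fin (m + 3)}
    (h : (wheelGraph (m + 3)).Adj (some v) u) :
    u = none ∨ u = some (v + 1) ∨ u = some (v - 1) := by
  match u with
  | none => exact Or.inl rfl
  | some w =>
    rcases cyc_adj_closed (wheel_adj_some_some.mp h) with h' | h'
    · exact Or.inr (Or.inl (by rw [h']))
    · exact Or.inr (Or.inr (by rw [h']))

lemma wheel_k_le_four {k : ℕ} (c : Option (Fin (m + 3)) → Fin k)
    (hc : IsJColoring (wheelGraph (m + 3)) c) : k ≤ 4 := by
  have hrb := hc.2 (some 0)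
  choose f hf1 hf2 using hrb
  have hmem : ∀ i ∈ (Finset.univ : Finset (Fin k)),
      f i ∈ ({some 0, none, some (0 + 1), some (0 - 1)} : Finset (Option (Fin (m + 3)))) := by
    intro i _
    rcases hf1 i with h | h
    · simp [h]
    · rcases wheel_adj_closed h with h' | h' | h' <;> simp [h']
  have hinj : Set.InjOn f (Finset.univ : Finset (Fin k)) := by
    intro a _ b _ hab
    rw [← hf2 a, ← hf2 b, hab]
  have hcard := Finset.card_le_card_of_injOn f hmem hinj
  have h4 : ({some 0, none, some (0 + 1), some (0 - 1)} :
      Finset (Option (Fin (m + 3)))).card ≤ 4 := by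
    refine (Finset.card_insert_le _ _).trans ?_
    have h1 := Finset.card_insert_le (none : Option (Fin (m + 3)))
      ({some (0 + 1), some (0 - 1)} : Finset (Option (Fin (m + 3))))
    have h2 := Finset.card_insert_le (some (0 + 1) : Option (Fin (m + 3)))
      ({some (0 - 1)} : Finset (Option (Fin (m + 3))))
    simp only [Finset.card_singleton] at h2
    omega
  simpa using hcard.trans h4

/-- The three colours around any vertex of a 3-J-coloured cycle are pairwise distinct. -/
lemma three_distinct {c : Fin (m + 3) → Fin 3}
    (hc : IsJColoring (cycleGraph (m + 3)) c) (v : Fin (m + 3)) :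
    c (v + 1) ≠ c (v - 1) := by
  intro heq
  have hne1 : c (v + 1) ≠ c v := (hc.1 v (v + 1) (cyc_adj_succ v)).symm
  obtain ⟨i, hi1, hi2⟩ : ∃ i : Fin 3, i ≠ c v ∧ i ≠ c (v + 1) := by
    revert hne1
    generalize c v = a; generalize c (v + 1) = b
    revert a b; decide
  obtain ⟨u, hu1, hu2⟩ := hc.2 v i
  have : u = v ∨ u = v + 1 ∨ u = v - 1 := by
    rcases hu1 with h | h
    · exact Or.inl h
    · exact Or.inr (cyc_adj_closed h)
  rcases this with rfl | rfl | rfl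
  · exact hi1 hu2.symm
  · exact hi2 hu2.symm
  · exact hi2 (by rw [← hu2, heq])

lemma period_three {c : Fin (m + 3) → Fin 3}
    (hc : IsJColoring (cycleGraph (m + 3)) c) (v : Fin (m + 3)) :
    c (v + 1 + 1 + 1) = c v := by
  -- c (w+1+1) = c (w-1) for w := v+1, plus (v+1)-1 = v
  have key : ∀ w : Fin (m + 3), c (w + 1 + 1) = c (w - 1) := by
    intro w
    have h1 : c (w + 1) ≠ c w := (hc.1 w (w + 1) (cyc_adj_succ w)).symm
    have h2 : c (w + 1 + 1) ≠ c (w + 1) := (hc.1 (w + 1) (w + 1 + 1) (cyc_adj_succ (w + 1))).symm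
    have h3 : c (w + 1 + 1) ≠ c w := by
      have := three_distinct hc (w + 1)
      simpa [add_sub_cancel_right] using this
    have h4 : c (w - 1) ≠ c w := hc.1 w (w - 1) (cyc_adj_pred w)|>.symm
    have h5 : c (w - 1) ≠ c (w + 1) := fun h => three_distinct hc w (h.symm)
    revert h1 h2 h3 h4 h5
    generalize c (w + 1 + 1) = x; generalize c (w - 1) = y
    generalize c w = a; generalize c (w + 1) = b
    revert x y a b; decide
  have := key (v + 1)
  rwa [add_sub_cancel_right] at this

lemma three_col_dvd {c : Fin (m + 3) → Fin 3}
    (hc : IsJColoring (cycleGraph (m + 3)) c) : 3 ∣ (m + 3) := by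
  by_contra hnd
  have hcop : Nat.Coprime 3 (m + 3) := (Nat.prime_three.coprime_iff_not_dvd).mpr hnd
  obtain ⟨t, -, ht⟩ := Nat.exists_mul_mod_eq_one_of_coprime hcop (by omega)
  have hper : ∀ s : ℕ, c ((3 * s : ℕ) : Fin (m + 3)) = c 0 := by
    intro s
    induction s with
    | zero => norm_num
    | succ s ih =>
      have : ((3 * (s + 1) : ℕ) : Fin (m + 3)) = ((3 * s : ℕ) : Fin (m + 3)) + 1 + 1 + 1 := by
        push_cast [show 3 * (s + 1) = 3 * s + 1 + 1 + 1 from by ring]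
        ring
      rw [this, period_three hc, ih]
  have hcast : ((3 * t : ℕ) : Fin (m + 3)) = 1 := by
    apply Fin.ext
    rw [Fin.val_natCast, ht]
    simp
  have : c 1 = c 0 := by rw [← hcast, hper t]
  exact hc.1 0 1 cyc_adj_zero_one this.symm

end Helpers3
section Helpers4
open SimpleGraph
variable {m : ℕ}

/-- Extend a cycle J-colouring to a wheel J-colouring with one extra colour. -/
lemma wheel_of_cycle {k : ℕ} {c : Fin (m + 3) → Fin k}
    (hc : IsJColoring (cycleGraph (m + 3)) c) :
    ∃ d : Option (Fin (m + 3)) → Fin (k + 1), IsJColoring (wheelGraph (m + 3)) d := by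
  refine ⟨fun o => o.elim (Fin.last k) (fun i => (c i).castSucc), ?_, ?_⟩
  · intro u v huv
    match u, v with
    | none, none => exact absurd huv ((wheelGraph (m + 3)).loopless.irrefl none)
    | none, some j =>
      simp only [Option.elim]
      exact (Fin.castSucc_lt_last (c j)).ne'
    | some i, none =>
      simp only [Option.elim]
      exact (Fin.castSucc_lt_last (c i)).ne
    | some i, some j =>
      simp only [Option.elim]
      intro hij
      exact hc.1 i j (wheel_adj_some_some.mp huv) (Fin.castSucc_injective k hij)
  · intro v i
    rcases Fin.eq_castSucc_or_eq_last i with ⟨j, rfl⟩ | rfl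
    · match v with
      | none =>
        obtain ⟨u, _, hu2⟩ := hc.2 0 j
        exact ⟨some u, Or.inr wheel_adj_none_some, by simp [hu2]⟩
      | some w =>
        obtain ⟨u, hu1, hu2⟩ := hc.2 w j
        refine ⟨some u, ?_, by simp [hu2]⟩
        rcases hu1 with rfl | h
        · exact Or.inl rfl
        · exact Or.inr (wheel_adj_some_some.mpr h)
    · match v with
      | none => exact ⟨none, Or.inl rfl, rfl⟩
      | some w => exact ⟨none, Or.inr wheel_adj_some_none, rfl⟩

/-- Restrict a wheel J-colouring to a cycle J-colouring with one fewer colour. -/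
lemma cycle_of_wheel {k : ℕ} {d : Option (Fin (m + 3)) → Fin (k + 1)}
    (hd : IsJColoring (wheelGraph (m + 3)) d) :
    ∃ c : Fin (m + 3) → Fin k, IsJColoring (cycleGraph (m + 3)) c := by
  set a : Fin (k + 1) := d none with ha
  set e := finSuccEquiv' a with he
  have hne : ∀ i : Fin (m + 3), d (some i) ≠ a :=
    fun i => hd.1 (some i) none wheel_adj_some_none
  have hsome : ∀ i : Fin (m + 3), ∃ j : Fin k, e (d (some i)) = some j := by
    intro i
    match hh : e (d (some i)) with
    | some j => exact ⟨j, rfl⟩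
    | none =>
      exact absurd (e.injective (hh.trans (finSuccEquiv'_at a).symm)) (hne i)
  choose c hcval using hsome
  refine ⟨c, ?_, ?_⟩
  · intro u v huv hcc
    have : e (d (some u)) = e (d (some v)) := by rw [hcval u, hcval v, hcc]
    exact hd.1 (some u) (some v) (wheel_adj_some_some.mpr huv) (e.injective this)
  · intro v i
    obtain ⟨u, hu1, hu2⟩ := hd.2 (some v) (e.symm (some i))
    have hunone : u ≠ none := by
      intro hu
      rw [hu] at hu2
      have := congrArg e hu2
      rw [Equiv.apply_symm_apply] at this
      rw [← ha] at this
      simp [he, finSuccEquiv'_at] at this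
    obtain ⟨w, rfl⟩ := Option.ne_none_iff_exists'.mp hunone
    have hcw : c w = i := by
      have : e (d (some w)) = some i := by rw [hu2, Equiv.apply_symm_apply]
      rw [hcval w] at this
      exact Option.some_injective _ this
    refine ⟨w, ?_, hcw⟩
    rcases hu1 with h | h
    · exact Or.inl (Option.some_injective _ h)
    · exact Or.inr (wheel_adj_some_some.mp h)

end Helpers4
theorem J_number_wheel (n : ℕ) (hn : 3 ≤ n)
    (h : ∃ k : ℕ, ∃ c : Fin n → Fin k, IsJColoring (cycleGraph n) c) :
    (∃ k : ℕ, ∃ c : Option (Fin n) → Fin k, IsJColoring (wheelGraph n) c) ∧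
      JNumber (wheelGraph n) = 1 + JNumber (cycleGraph n) ∧
      (n % 3 = 0 → JNumber (wheelGraph n) = 4) ∧
      (n % 2 = 0 → n % 3 ≠ 0 → JNumber (wheelGraph n) = 3) := by
  obtain ⟨m, rfl⟩ : ∃ m, n = m + 3 := ⟨n - 3, by omega⟩
  obtain ⟨k0, c0, hc0⟩ := h
  have hk0ge : 2 ≤ k0 := cycle_k_ge_two c0 hc0
  have hk0le : k0 ≤ 3 := cycle_k_le_three c0 hc0
  have hexW : ∃ k, ∃ d : Option (Fin (m + 3)) → Fin k, IsJColoring (wheelGraph (m + 3)) d :=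
    ⟨k0 + 1, wheel_of_cycle hc0⟩
  refine ⟨hexW, ?_⟩
  by_cases h3 : ∃ c : Fin (m + 3) → Fin 3, IsJColoring (cycleGraph (m + 3)) c
  · obtain ⟨c3, hc3⟩ := h3
    have hC : JNumber (cycleGraph (m + 3)) = 3 := by
      apply IsGreatest.csSup_eq
      constructor
      · exact ⟨c3, hc3⟩
      · intro k hk
        obtain ⟨c, hc⟩ := hk
        exact cycle_k_le_three c hc
    have hW : JNumber (wheelGraph (m + 3)) = 4 := by
      apply IsGreatest.csSup_eq
      constructor
      · exact wheel_of_cycle hc3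
      · intro k hk
        obtain ⟨c, hc⟩ := hk
        exact wheel_k_le_four c hc
    exact ⟨by rw [hW, hC], fun _ => hW,
      fun _ hne => absurd (three_col_dvd hc3) (by omega)⟩
  · have hk0 : k0 = 2 := by
      rcases Nat.lt_or_ge k0 3 with hlt | hge
      · omega
      · exfalso
        apply h3
        have : k0 = 3 := by omega
        subst this
        exact ⟨c0, hc0⟩
    subst hk0
    have hC : JNumber (cycleGraph (m + 3)) = 2 := by
      apply IsGreatest.csSup_eq
      refine ⟨⟨c0, hc0⟩, ?_⟩
      intro k hk
      obtain ⟨c, hc⟩ := hk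
      have h1 := cycle_k_le_three c hc
      have h2 : k ≠ 3 := by
        rintro rfl
        exact h3 ⟨c, hc⟩
      omega
    have hW : JNumber (wheelGraph (m + 3)) = 3 := by
      apply IsGreatest.csSup_eq
      refine ⟨wheel_of_cycle hc0, ?_⟩
      intro k hk
      obtain ⟨d, hd⟩ := hk
      have h4 := wheel_k_le_four d hd
      have hne4 : k ≠ 4 := by
        rintro rfl
        exact h3 (cycle_of_wheel (k := 3) hd)
      omega
    refine ⟨by rw [hW, hC], ?_, fun _ _ => hW⟩
    intro hmod
    exact absurd (exists_three_coloring (by omega)) h3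
end

section
/- In any proper 3-colouring of an odd cycle C_n with n ≡ ±1 (mod 6), at least one vertex has a closed neighbourhood missing one of the three colours. -/
open SimpleGraph

lemma third_colour : ∀ a b : Fin 3, ∃ i : Fin 3, i ≠ a ∧ i ≠ b := by decide

lemma diff_eq : ∀ a b x : Fin 3, a ≠ b → x ≠ b → x ≠ a →
    ((x.val : ZMod 3) - b.val) = ((b.val : ZMod 3) - a.val) := by decide

lemma val_cast_inj : ∀ a b : Fin 3, (a.val : ZMod 3) = b.val → a = b := by decide

open Fin.CommRing in
theorem odd_cycle_no_rainbow_3coloring (n : ℕ) (hn : 3 ≤ n)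
    (h : n % 6 = 1 ∨ n % 6 = 5) :
    ∀ c : Fin n → Fin 3, ProperColoring (cycleGraph n) c →
      ∃ v : Fin n, ∃ i : Fin 3,
        ∀ u, (u = v ∨ (cycleGraph n).Adj v u) → c u ≠ i := by
  intro c hc
  by_contra hcon
  push_neg at hcon
  obtain ⟨m, rfl⟩ : ∃ m, n = m + 2 := ⟨n - 2, by omega⟩
  -- adjacency to successor
  have hadj : ∀ v : Fin (m + 2), (cycleGraph (m + 2)).Adj v (v + 1) := by
    intro v
    rw [cycleGraph_adj]
    right
    ring_nf
  -- c (v+1) ≠ c (v-1) for all v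
  have hne : ∀ v : Fin (m + 2), c (v + 1) ≠ c (v - 1) := by
    intro v heq
    obtain ⟨i, hi1, hi2⟩ := third_colour (c v) (c (v + 1))
    obtain ⟨u, hu, hcu⟩ := hcon v i
    rcases hu with rfl | hadj'
    · exact hi1 hcu.symm
    · rw [cycleGraph_adj] at hadj'
      rcases hadj' with h' | h'
      · have : u = v - 1 := by
          rw [sub_eq_iff_eq_add] at h'; rw [eq_sub_iff_add_eq, h']; ring
        rw [this, ← heq] at hcu
        exact hi2 hcu.symm
      · have : u = v + 1 := by
          rw [sub_eq_iff_eq_add] at h'; rw [h']; ring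
        rw [this] at hcu
        exact hi2 hcu.symm
  set f : Fin (m + 2) → ZMod 3 := fun v => ((c v).val : ZMod 3) with hf
  set D0 : ZMod 3 := f 1 - f 0 with hD0
  have hstep : ∀ v : Fin (m + 2), f (v + 1) - f v = f v - f (v - 1) := by
    intro v
    apply diff_eq (c (v - 1)) (c v) (c (v + 1))
    · have : (cycleGraph (m + 2)).Adj (v - 1) ((v - 1) + 1) := hadj (v - 1)
      have hv : (v - 1) + 1 = v := by ring
      rw [hv] at this
      exact hc _ _ this
    · exact fun hxy => hc _ _ (hadj v) hxy.symm
    · exact hne v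
  have hstep' : ∀ w : Fin (m + 2), f (w + 1 + 1) - f (w + 1) = f (w + 1) - f w := by
    intro w
    have := hstep (w + 1)
    rwa [add_sub_cancel_right] at this
  have hDk : ∀ k : ℕ, f ((k : Fin (m + 2)) + 1) - f (k : Fin (m + 2)) = D0 := by
    intro k
    induction k with
    | zero => simp [hD0]
    | succ k ih =>
      have hcast : ((k + 1 : ℕ) : Fin (m + 2)) = (k : Fin (m + 2)) + 1 := by push_cast; ring
      rw [hcast, hstep']
      exact ih
  have htel : ∀ k : ℕ, f (k : Fin (m + 2)) = f 0 + (k : ZMod 3) * D0 := by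
    intro k
    induction k with
    | zero => simp
    | succ k ih =>
      have hcast : ((k + 1 : ℕ) : Fin (m + 2)) = (k : Fin (m + 2)) + 1 := by push_cast; ring
      have := hDk k
      rw [sub_eq_iff_eq_add] at this
      rw [hcast, this, ih]
      push_cast
      ring
  have hfin : ((m + 2 : ℕ) : Fin (m + 2)) = 0 := by
    simp
  have hkey := htel (m + 2)
  rw [hfin] at hkey
  have hzero : ((m + 2 : ℕ) : ZMod 3) * D0 = 0 := by linear_combination -hkey
  have hD0ne : D0 ≠ 0 := by
    intro h0
    have h01 : c 1 ≠ c 0 := fun hxy => hc _ _ (by simpa using hadj 0) hxy.symm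
    apply h01
    apply val_cast_inj
    have : f 1 = f 0 := by
      have := sub_eq_zero.mp (hD0 ▸ h0)
      exact this
    simpa [hf] using this
  have hcast0 : ((m + 2 : ℕ) : ZMod 3) = 0 := by
    rcases mul_eq_zero.mp hzero with h' | h'
    · exact h'
    · exact absurd h' hD0ne
  have hdvd : 3 ∣ m + 2 := (ZMod.natCast_eq_zero_iff _ _).mp hcast0
  omega
end
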